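/- Let g, h, y be three positive locally integrable functions on [t₀, ∞) such that y' is locally integrable on [t₀, ∞), satisfying dy/dt ≤ g·y + h for all t ≥ t₀, and ∫_t^{t+r} g(s) ds ≤ a₁, ∫_t^{t+r} h(s) ds ≤ a₂, ∫_t^{t+r} y(s) ds ≤ a₃ for all t ≥ t₀, where r, a₁, a₂, a₃ are positive constants. Then y(t+r) ≤ (a₃/r + a₂)·e^{a₁} for all t ≥ t₀. -/

import Mathlib

open MeasureTheory intervalIntegral Set

lemma II' {f : ℝ → ℝ} {a b c d : ℝ} (hI : IntegrableOn f (Set.Icc a b))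
    (hac : a ≤ c) (hcd : c ≤ d) (hdb : d ≤ b) : IntervalIntegrable f volume c d :=
  (intervalIntegrable_iff_integrableOn_Icc_of_le hcd).mpr
    (hI.mono_set (Set.Icc_subset_Icc hac hdb))

lemma mono_int {f : ℝ → ℝ} {a b c : ℝ} (hab : a ≤ b) (hbc : b ≤ c)
    (hI : IntegrableOn f (Set.Icc a c)) (h0 : ∀ x ∈ Set.Icc a c, 0 ≤ f x) :
    (∫ u in a..b, f u) ≤ ∫ u in a..c, f u := by
  have h1 : (∫ u in a..b, f u) + ∫ u in b..c, f u = ∫ u in a..c, f u :=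
    intervalIntegral.integral_add_adjacent_intervals
      (II' hI le_rfl hab hbc) (II' hI hab hbc le_rfl)
  have h2 : 0 ≤ ∫ u in b..c, f u :=
    intervalIntegral.integral_nonneg hbc (fun x hx => h0 x ⟨hab.trans hx.1, hx.2⟩)
  linarith


lemma triangle_swap (f k : ℝ → ℝ) (s τ : ℝ) (hsτ : s ≤ τ)
    (hf : IntegrableOn f (Set.Ioc s τ)) (hk : IntegrableOn k (Set.Ioc s τ)) :
    (∫ u in s..τ, f u * ∫ v in s..u, k v) = ∫ v in s..τ, k v * ∫ u in v..τ, f u := by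
  set μ := volume.restrict (Set.Ioc s τ) with hμ
  set F : ℝ × ℝ → ℝ := fun p => Set.indicator {p : ℝ × ℝ | p.2 ≤ p.1} (fun p => f p.1 * k p.2) p with hF
  have hmeas : MeasurableSet {p : ℝ × ℝ | p.2 ≤ p.1} :=
    measurableSet_le measurable_snd measurable_fst
  have hFi : Integrable F (μ.prod μ) := by
    have : Integrable (fun p : ℝ × ℝ => f p.1 * k p.2) (μ.prod μ) :=
      Integrable.mul_prod hf hk
    exact this.indicator hmeas
  have swap := MeasureTheory.integral_integral_swap (f := fun u v => F (u, v)) hFi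
  have lhs : (∫ u, ∫ v, F (u, v) ∂μ ∂μ) = ∫ u in s..τ, f u * ∫ v in s..u, k v := by
    rw [intervalIntegral.integral_of_le hsτ]
    rw [hμ]
    apply setIntegral_congr_fun measurableSet_Ioc
    intro u hu
    dsimp only
    have : (fun v => F (u, v)) = Set.indicator (Set.Iic u) (fun v => f u * k v) := by
      ext v
      simp only [hF, Set.indicator, Set.mem_setOf_eq, Set.mem_Iic]
    rw [this, MeasureTheory.integral_indicator measurableSet_Iic]
    rw [Measure.restrict_restrict measurableSet_Iic]
    have hset : Set.Iic u ∩ Set.Ioc s τ = Set.Ioc s u := by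
      ext v
      simp only [Set.mem_inter_iff, Set.mem_Iic, Set.mem_Ioc]
      constructor
      · rintro ⟨h1, h2, h3⟩; exact ⟨h2, h1⟩
      · rintro ⟨h1, h2⟩; exact ⟨h2, h1, h2.trans hu.2⟩
    rw [hset, MeasureTheory.integral_const_mul, intervalIntegral.integral_of_le hu.1.le]
  have rhs : (∫ v, ∫ u, F (u, v) ∂μ ∂μ) = ∫ v in s..τ, k v * ∫ u in v..τ, f u := by
    rw [intervalIntegral.integral_of_le hsτ]
    rw [hμ]
    apply setIntegral_congr_fun measurableSet_Ioc
    intro v hv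
    dsimp only
    have : (fun u => F (u, v)) = Set.indicator (Set.Ici v) (fun u => f u * k v) := by
      ext u
      simp only [hF, Set.indicator, Set.mem_setOf_eq, Set.mem_Ici]
    rw [this, MeasureTheory.integral_indicator measurableSet_Ici]
    rw [Measure.restrict_restrict measurableSet_Ici]
    have hset : Set.Ici v ∩ Set.Ioc s τ = Set.Icc v τ := by
      ext u
      simp only [Set.mem_inter_iff, Set.mem_Ici, Set.mem_Icc, Set.mem_Ioc]
      constructor
      · rintro ⟨h1, _, h3⟩; exact ⟨h1, h3⟩
      · rintro ⟨h1, h2⟩; exact ⟨h1, hv.1.trans_le h1, h2⟩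
    rw [hset, integral_Icc_eq_integral_Ioc, MeasureTheory.integral_mul_const,
      intervalIntegral.integral_of_le hv.2, mul_comm]
  rw [← lhs, ← rhs]; exact swap

lemma key_identity (g : ℝ → ℝ) (s T : ℝ) (hsT : s ≤ T)
    (hg : IntegrableOn g (Set.Icc s T)) :
    ∀ k : ℕ, ∀ τ ∈ Set.Icc s T,
      (∫ u in s..τ, g u * (∫ v in s..u, g v) ^ k)
        = (∫ v in s..τ, g v) ^ (k + 1) / (k + 1) := by
  have II : ∀ (f : ℝ → ℝ) (a b : ℝ), a ≤ b → IntegrableOn f (Set.Ioc a b) →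
      IntervalIntegrable f volume a b := fun f a b hab hI =>
    (intervalIntegrable_iff_integrableOn_Ioc_of_le hab).mpr hI
  have hGc : ContinuousOn (fun u => ∫ v in s..u, g v) (Set.Icc s T) := by
    have := intervalIntegral.continuousOn_primitive_interval
      (a := s) (b := T) (μ := volume) (f := g) (by rwa [Set.uIcc_of_le hsT])
    rwa [Set.uIcc_of_le hsT] at this
  have hgk : ∀ k : ℕ, IntegrableOn (fun u => g u * (∫ v in s..u, g v) ^ k) (Set.Icc s T) :=
    fun k => hg.mul_continuousOn (hGc.pow k) isCompact_Icc
  intro k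
  induction k with
  | zero => intro τ hτ; simp
  | succ k ih =>
    intro τ hτ
    set G : ℝ → ℝ := fun u => ∫ v in s..u, g v with hGdef
    set X : ℝ := ∫ u in s..τ, g u * G u ^ (k + 1) with hX
    have hfI : IntegrableOn g (Set.Ioc s τ) :=
      hg.mono_set ((Set.Ioc_subset_Icc_self).trans (Set.Icc_subset_Icc_right hτ.2))
    have hkI : ∀ m : ℕ, IntegrableOn (fun v => g v * G v ^ m) (Set.Ioc s τ) := fun m =>
      (hgk m).mono_set ((Set.Ioc_subset_Icc_self).trans (Set.Icc_subset_Icc_right hτ.2))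
    have eq : X = ((k : ℝ) + 1) * ((G τ ^ (k + 1) / ((k : ℝ) + 1)) * G τ - X) := by
      calc X = ∫ u in s..τ, ((k:ℝ) + 1) * (g u * ∫ v in s..u, (g v * G v ^ k)) := by
              apply intervalIntegral.integral_congr
              intro u hu
              rw [Set.uIcc_of_le hτ.1] at hu
              have := ih u ⟨hu.1, hu.2.trans hτ.2⟩
              dsimp only
              rw [this]
              have hne : ((k:ℝ)+1) ≠ 0 := by positivity
              field_simp
              rfl
        _ = ((k:ℝ) + 1) * ∫ u in s..τ, g u * ∫ v in s..u, (g v * G v ^ k) :=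
              intervalIntegral.integral_const_mul _ _
        _ = ((k:ℝ) + 1) * ∫ v in s..τ, (g v * G v ^ k) * ∫ u in v..τ, g u := by
              rw [triangle_swap g (fun v => g v * G v ^ k) s τ hτ.1 hfI (hkI k)]
        _ = ((k:ℝ) + 1) * ∫ v in s..τ, (g v * G v ^ k * G τ - g v * G v ^ (k+1)) := by
              congr 1
              apply intervalIntegral.integral_congr
              intro v hv
              rw [Set.uIcc_of_le hτ.1] at hv
              have hsplit : G v + (∫ u in v..τ, g u) = G τ :=
                intervalIntegral.integral_add_adjacent_intervals
                  (II _ _ _ hv.1 (hfI.mono_set (Set.Ioc_subset_Ioc le_rfl hv.2)))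
                  (II _ _ _ hv.2 (hfI.mono_set (Set.Ioc_subset_Ioc hv.1 le_rfl)))
              have hval : (∫ u in v..τ, g u) = G τ - G v := by linarith
              dsimp only
              rw [hval]
              ring
        _ = ((k:ℝ) + 1) * ((∫ v in s..τ, g v * G v ^ k) * G τ - X) := by
              rw [intervalIntegral.integral_sub
                ((II _ _ _ hτ.1 (hkI k)).mul_const _) (II _ _ _ hτ.1 (hkI (k+1)))]
              rw [intervalIntegral.integral_mul_const]
        _ = ((k:ℝ) + 1) * ((G τ ^ (k + 1) / ((k : ℝ) + 1)) * G τ - X) := by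
              rw [ih τ hτ]
    have hk2 : ((k:ℝ) + 2) ≠ 0 := by positivity
    have hk1 : ((k:ℝ) + 1) ≠ 0 := by positivity
    have hpow : G τ ^ (k + 1) * G τ = G τ ^ (k + 2) := (pow_succ _ _).symm
    push_cast
    field_simp at eq ⊢
    nlinarith [eq, hpow]

/-- The Uniform Gronwall Lemma. -/
theorem uniform_gronwall
    (t₀ r a₁ a₂ a₃ : ℝ) (hr : 0 < r) (ha₁ : 0 < a₁) (ha₂ : 0 < a₂) (ha₃ : 0 < a₃)
    (g h y y' : ℝ → ℝ)
    (hg0 : ∀ t, t₀ ≤ t → 0 ≤ g t) (hh0 : ∀ t, t₀ ≤ t → 0 ≤ h t)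
    (hy0 : ∀ t, t₀ ≤ t → 0 ≤ y t)
    (hgL : LocallyIntegrableOn g (Set.Ici t₀))
    (hhL : LocallyIntegrableOn h (Set.Ici t₀))
    (hyL : LocallyIntegrableOn y (Set.Ici t₀))
    (hy'L : LocallyIntegrableOn y' (Set.Ici t₀))
    (hftc : ∀ s t, t₀ ≤ s → s ≤ t → y t = y s + ∫ u in s..t, y' u)
    (hineq : ∀ᵐ t : ℝ ∂volume, t₀ ≤ t → y' t ≤ g t * y t + h t)
    (hga : ∀ t, t₀ ≤ t → (∫ s in t..t + r, g s) ≤ a₁)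
    (hha : ∀ t, t₀ ≤ t → (∫ s in t..t + r, h s) ≤ a₂)
    (hya : ∀ t, t₀ ≤ t → (∫ s in t..t + r, y s) ≤ a₃) :
    ∀ t, t₀ ≤ t → y (t + r) ≤ (a₃ / r + a₂) * Real.exp a₁ := by
  intro t ht
  set T := t + r with hTdef
  set Z := t + 2 * r with hZdef
  have htT : t ≤ T := by simp [hTdef]; linarith
  have hTZ : T ≤ Z := by simp [hTdef, hZdef]; linarith
  have ht₀Z : t₀ ≤ Z := by linarith [ht]
  -- integrability on the big interval
  have hsub : Set.Icc t₀ Z ⊆ Set.Ici t₀ := Set.Icc_subset_Ici_self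
  have hgI : IntegrableOn g (Set.Icc t₀ Z) := hgL.integrableOn_compact_subset hsub isCompact_Icc
  have hhI : IntegrableOn h (Set.Icc t₀ Z) := hhL.integrableOn_compact_subset hsub isCompact_Icc
  have hyI : IntegrableOn y (Set.Icc t₀ Z) := hyL.integrableOn_compact_subset hsub isCompact_Icc
  have hy'I : IntegrableOn y' (Set.Icc t₀ Z) := hy'L.integrableOn_compact_subset hsub isCompact_Icc
  -- continuity of y
  have hyc : ContinuousOn y (Set.Icc t₀ Z) := by
    have hprim : ContinuousOn (fun τ => y t₀ + ∫ u in t₀..τ, y' u) (Set.Icc t₀ Z) := by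
      apply continuousOn_const.add
      have := intervalIntegral.continuousOn_primitive_interval
        (a := t₀) (b := Z) (μ := volume) (f := y') (by rwa [Set.uIcc_of_le ht₀Z])
      rwa [Set.uIcc_of_le ht₀Z] at this
    exact hprim.congr (fun τ hτ => hftc t₀ τ le_rfl hτ.1)
  have hgyI : IntegrableOn (fun u => g u * y u) (Set.Icc t₀ Z) :=
    hgI.mul_continuousOn hyc isCompact_Icc
  -- bound M for y on [t, T]
  set M := y t + ∫ u in t..T, |y' u| with hMdef
  have hy'absI : IntegrableOn (fun u => |y' u|) (Set.Icc t₀ Z) := hy'I.abs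
  have hM0 : 0 ≤ M := by
    have h1 : 0 ≤ ∫ u in t..T, |y' u| :=
      intervalIntegral.integral_nonneg htT (fun x _ => abs_nonneg _)
    have := hy0 t ht
    simp only [hMdef]; linarith
  have hMb : ∀ τ ∈ Set.Icc t T, y τ ≤ M := by
    intro τ hτ
    have hτZ : τ ≤ Z := hτ.2.trans hTZ
    rw [hftc t τ ht hτ.1]
    have h1 : (∫ u in t..τ, y' u) ≤ ∫ u in t..τ, |y' u| :=
      intervalIntegral.integral_mono_on hτ.1
        (II' hy'I ht hτ.1 hτZ) (II' hy'absI ht hτ.1 hτZ) (fun x _ => le_abs_self _)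
    have h2 : (∫ u in t..τ, |y' u|) ≤ ∫ u in t..T, |y' u| :=
      mono_int hτ.1 hτ.2 (hy'absI.mono_set (Set.Icc_subset_Icc ht hTZ))
        (fun x _ => abs_nonneg _)
    simp only [hMdef]; linarith
  -- integral inequality
  have hkey : ∀ s τ, t ≤ s → s ≤ τ → τ ≤ T →
      y τ ≤ (y s + a₂) + ∫ u in s..τ, g u * y u := by
    intro s τ hts hsτ hτT
    have ht₀s : t₀ ≤ s := ht.trans hts
    have hτZ : τ ≤ Z := hτT.trans hTZ
    have ht₀t : t₀ ≤ t := ht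
    rw [hftc s τ ht₀s hsτ]
    have hii1 : IntervalIntegrable y' volume s τ := II' hy'I ht₀s hsτ hτZ
    have hiiGY : IntervalIntegrable (fun u => g u * y u) volume s τ := II' hgyI ht₀s hsτ hτZ
    have hiiH : IntervalIntegrable h volume s τ := II' hhI ht₀s hsτ hτZ
    have h1 : (∫ u in s..τ, y' u) ≤ ∫ u in s..τ, (g u * y u + h u) := by
      apply intervalIntegral.integral_mono_ae_restrict hsτ hii1 (hiiGY.add hiiH)
      filter_upwards [ae_restrict_mem measurableSet_Icc, ae_restrict_of_ae hineq] with x hx hx2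
      exact hx2 (ht₀s.trans hx.1)
    have h2 : (∫ u in s..τ, (g u * y u + h u))
        = (∫ u in s..τ, g u * y u) + ∫ u in s..τ, h u :=
      intervalIntegral.integral_add hiiGY hiiH
    have h3 : (∫ u in s..τ, h u) ≤ a₂ := by
      have hsr : s + r ≤ Z := by simp [hZdef]; linarith [hτT, hsτ, htT]
      have : (∫ u in s..τ, h u) ≤ ∫ u in s..(s + r), h u := by
        apply mono_int hsτ (by linarith [hτT]) (hhI.mono_set (Set.Icc_subset_Icc ht₀s hsr))
        exact fun x hx => hh0 x (ht₀s.trans hx.1)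
      exact this.trans (hha s ht₀s)
    linarith
  have hgron : ∀ s, t ≤ s → s ≤ T → y T ≤ (y s + a₂) * Real.exp a₁ := by
    intro s hts hsT
    have ht₀s : t₀ ≤ s := ht.trans hts
    set A := y s + a₂ with hAdef
    have hA0 : 0 ≤ A := add_nonneg (hy0 s ht₀s) ha₂.le
    set Gs : ℝ → ℝ := fun τ => ∫ u in s..τ, g u with hGsdef
    have hgIs : IntegrableOn g (Set.Icc s T) :=
      hgI.mono_set (Set.Icc_subset_Icc ht₀s hTZ)
    have hGsc : ContinuousOn Gs (Set.Icc s T) := by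
      have := intervalIntegral.continuousOn_primitive_interval
        (a := s) (b := T) (μ := volume) (f := g) (by rwa [Set.uIcc_of_le hsT])
      rwa [Set.uIcc_of_le hsT] at this
    have hgGs : ∀ m : ℕ, IntegrableOn (fun u => g u * Gs u ^ m) (Set.Icc s T) :=
      fun m => hgIs.mul_continuousOn (hGsc.pow m) isCompact_Icc
    have hGs0 : ∀ τ ∈ Set.Icc s T, 0 ≤ Gs τ := fun τ hτ =>
      intervalIntegral.integral_nonneg hτ.1 (fun x hx => hg0 x (ht₀s.trans hx.1))
    have hGsa : ∀ τ ∈ Set.Icc s T, Gs τ ≤ a₁ := by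
      intro τ hτ
      have hsr : s + r ≤ Z := by rw [hZdef]; linarith [hsT, hTdef ▸ hsT]
      have hτsr : τ ≤ s + r := by have := hτ.2; rw [hTdef] at this; linarith
      have h1 : Gs τ ≤ ∫ u in s..(s + r), g u := by
        apply mono_int hτ.1 hτsr (hgI.mono_set (Set.Icc_subset_Icc ht₀s hsr))
        exact fun x hx => hg0 x (ht₀s.trans hx.1)
      exact h1.trans (hga s ht₀s)
    -- main induction
    have claim : ∀ n : ℕ, ∀ τ ∈ Set.Icc s T,
        y τ ≤ A * (∑ i ∈ Finset.range n, Gs τ ^ i / i.factorial)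
          + M * (Gs τ ^ n / n.factorial) := by
      intro n
      induction n with
      | zero =>
        intro τ hτ
        simpa using hMb τ ⟨hts.trans hτ.1, hτ.2⟩
      | succ n ihn =>
        intro τ hτ
        have h1 : y τ ≤ A + ∫ u in s..τ, g u * y u := hkey s τ hts hτ.1 hτ.2
        set Fn : ℝ → ℝ := fun u =>
          A * (∑ i ∈ Finset.range n, Gs u ^ i / i.factorial) + M * (Gs u ^ n / n.factorial)
          with hFndef
        have hFnc : ContinuousOn Fn (Set.Icc s T) := by
          apply ContinuousOn.add
          · exact continuousOn_const.mul (continuousOn_finset_sum _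
              (fun i _ => (hGsc.pow i).div_const _))
          · exact continuousOn_const.mul ((hGsc.pow n).div_const _)
        have hFnI : IntegrableOn (fun u => g u * Fn u) (Set.Icc s T) :=
          hgIs.mul_continuousOn hFnc isCompact_Icc
        have h2 : (∫ u in s..τ, g u * y u) ≤ ∫ u in s..τ, g u * Fn u := by
          apply intervalIntegral.integral_mono_on hτ.1
            (II' hgyI ht₀s hτ.1 (hτ.2.trans hTZ))
            (II' hFnI le_rfl hτ.1 hτ.2)
          intro x hx
          exact mul_le_mul_of_nonneg_left (ihn x ⟨hx.1, hx.2.trans hτ.2⟩)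
            (hg0 x (ht₀s.trans hx.1))
        have h3 : (∫ u in s..τ, g u * Fn u)
            = (∑ i ∈ Finset.range n, (A / i.factorial) * (Gs τ ^ (i+1) / ((i:ℝ)+1)))
              + (M / n.factorial) * (Gs τ ^ (n+1) / ((n:ℝ)+1)) := by
          have hcongr : (∫ u in s..τ, g u * Fn u)
              = ∫ u in s..τ, ((∑ i ∈ Finset.range n,
                  (A / i.factorial) * (g u * Gs u ^ i))
                  + (M / n.factorial) * (g u * Gs u ^ n)) := by
            apply intervalIntegral.integral_congr
            intro u _
            simp only [hFndef, mul_add, Finset.mul_sum]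
            congr 1
            · exact Finset.sum_congr rfl (fun i _ => by ring)
            · ring
          rw [hcongr]
          have hIi : ∀ m : ℕ, IntervalIntegrable (fun u => g u * Gs u ^ m) volume s τ :=
            fun m => II' (hgGs m) le_rfl hτ.1 hτ.2
          have hSint : IntervalIntegrable
              (fun u => ∑ i ∈ Finset.range n, A / (i.factorial : ℝ) * (g u * Gs u ^ i))
              volume s τ := by
            have := IntervalIntegrable.sum (μ := volume) (a := s) (b := τ)
              (Finset.range n) (f := fun i u => A / (i.factorial : ℝ) * (g u * Gs u ^ i))
              (fun i _ => (hIi i).const_mul _)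
            have heq : (fun u => ∑ i ∈ Finset.range n, A / (i.factorial : ℝ) * (g u * Gs u ^ i))
                = (∑ i ∈ Finset.range n, fun u => A / (i.factorial : ℝ) * (g u * Gs u ^ i)) := by
              ext u
              simp
            rw [heq]
            exact this
          rw [intervalIntegral.integral_add hSint ((hIi n).const_mul _)]
          rw [intervalIntegral.integral_finset_sum (fun i _ => (hIi i).const_mul _)]
          have hki : ∀ m : ℕ, (∫ u in s..τ, g u * Gs u ^ m) = Gs τ ^ (m+1) / ((m:ℝ)+1) := by
            intro m
            have := key_identity g s T hsT hgIs m τ hτ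
            push_cast at this ⊢
            exact this
          congr 1
          · exact Finset.sum_congr rfl (fun i _ => by
              rw [intervalIntegral.integral_const_mul, hki i])
          · rw [intervalIntegral.integral_const_mul, hki n]
        have hfact : ∀ i : ℕ, ((i+1).factorial : ℝ) = ((i:ℝ)+1) * (i.factorial : ℝ) := by
          intro i
          rw [Nat.factorial_succ]
          push_cast
          ring
        have hfne : ∀ i : ℕ, ((i.factorial : ℝ)) ≠ 0 :=
          fun i => by exact_mod_cast Nat.factorial_ne_zero i
        have hsum : (∑ i ∈ Finset.range n, (A / i.factorial) * (Gs τ ^ (i+1) / ((i:ℝ)+1)))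
            = A * ∑ i ∈ Finset.range n, Gs τ ^ (i+1) / (((i+1).factorial : ℝ)) := by
          rw [Finset.mul_sum]
          apply Finset.sum_congr rfl
          intro i _
          rw [hfact i, div_mul_div_comm, mul_div_assoc,
            mul_comm ((i.factorial : ℝ)) ((i:ℝ)+1)]
        have hM' : (M / n.factorial) * (Gs τ ^ (n+1) / ((n:ℝ)+1))
            = M * (Gs τ ^ (n+1) / (((n+1).factorial : ℝ))) := by
          rw [hfact n, div_mul_div_comm, mul_div_assoc,
            mul_comm ((n.factorial : ℝ)) ((n:ℝ)+1)]
        have hgoal : A * (∑ i ∈ Finset.range (n+1), Gs τ ^ i / (i.factorial : ℝ))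
            = A + A * ∑ i ∈ Finset.range n, Gs τ ^ (i+1) / (((i+1).factorial : ℝ)) := by
          rw [Finset.sum_range_succ', mul_add]
          simp
          ring
        linarith
    -- pass to the limit
    have hfinal : ∀ n : ℕ, y T ≤ A * Real.exp a₁ + M * (a₁ ^ n / n.factorial) := by
      intro n
      have hTm : T ∈ Set.Icc s T := ⟨hsT, le_rfl⟩
      have h1 := claim n T hTm
      have h2 : (∑ i ∈ Finset.range n, Gs T ^ i / i.factorial) ≤ Real.exp a₁ :=
        (Real.sum_le_exp_of_nonneg (hGs0 T hTm) n).trans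
          (Real.exp_le_exp.mpr (hGsa T hTm))
      have h3 : Gs T ^ n / n.factorial ≤ a₁ ^ n / (n.factorial : ℝ) := by
        gcongr
        · exact hGs0 T hTm
        · exact hGsa T hTm
      calc y T ≤ A * (∑ i ∈ Finset.range n, Gs T ^ i / i.factorial)
            + M * (Gs T ^ n / n.factorial) := h1
        _ ≤ A * Real.exp a₁ + M * (a₁ ^ n / n.factorial) :=
            add_le_add (mul_le_mul_of_nonneg_left h2 hA0)
              (mul_le_mul_of_nonneg_left h3 hM0)
    have htend : Filter.Tendsto (fun n : ℕ => A * Real.exp a₁ + M * (a₁ ^ n / n.factorial))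
        Filter.atTop (nhds (A * Real.exp a₁)) := by
      have h0 : Filter.Tendsto (fun n : ℕ => a₁ ^ n / (n.factorial : ℝ))
          Filter.atTop (nhds 0) := FloorSemiring.tendsto_pow_div_factorial_atTop a₁
      have h1 := h0.const_mul M
      have h2 := h1.const_add (A * Real.exp a₁)
      simpa using h2
    exact ge_of_tendsto' htend hfinal
  have he := Real.exp_pos a₁
  have hlow : ∀ x ∈ Set.Icc t T, y T / Real.exp a₁ - a₂ ≤ y x := by
    intro x hx
    have h1 := hgron x hx.1 hx.2
    rw [sub_le_iff_le_add, div_le_iff₀ he]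
    exact h1.trans_eq (by ring)
  have hint : (∫ x in t..T, (y T / Real.exp a₁ - a₂)) ≤ a₃ := by
    have h1 : (∫ x in t..T, (y T / Real.exp a₁ - a₂)) ≤ ∫ x in t..T, y x :=
      intervalIntegral.integral_mono_on htT intervalIntegrable_const
        (II' hyI ht htT hTZ) hlow
    have h3 := hya t ht
    rw [← hTdef] at h3
    exact h1.trans h3
  rw [intervalIntegral.integral_const, hTdef] at hint
  have h2 : t + r - t = r := by ring
  rw [h2, smul_eq_mul] at hint
  have h4 : y T / Real.exp a₁ - a₂ ≤ a₃ / r := by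
    rw [le_div_iff₀ hr]
    linarith
  have h5 : y T / Real.exp a₁ ≤ a₃ / r + a₂ := by linarith
  calc y T = (y T / Real.exp a₁) * Real.exp a₁ := by field_simp
    _ ≤ (a₃ / r + a₂) * Real.exp a₁ := mul_le_mul_of_nonneg_right h5 he.le
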